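/- For every n ≥ 4, there exists a strong digraph D on n vertices which is not supereulerian, contains exactly one pair {u,v} of dominated nonadjacent vertices, and satisfies d(u) + d(v) = 2n − 4 as well as d⁻(u) + d⁺(v) = d⁺(u) + d⁻(v) = n − 2. -/

import Mathlib

/-- A digraph: loopless, no parallel arcs (arcs given by a relation). -/
structure Digr (V : Type) where
  Adj : V → V → Prop
  loopless : ∀ v, ¬ Adj v v

namespace Digr

variable {V : Type}

/-- The list of arcs (consecutive pairs) of a walk given by its list of vertices. -/
def arcs (l : List V) : List (V × V) := l.zip l.tail

/-- The vertex set of a walk. -/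
def verts (l : List V) : Set V := {v | v ∈ l}

/-- A directed trail: a nonempty walk repeating no arc. -/
def IsDitrail (D : Digr V) (l : List V) : Prop :=
  l ≠ [] ∧ l.Chain' D.Adj ∧ (arcs l).Nodup

/-- A closed directed trail. -/
def IsClosedDitrail (D : Digr V) (l : List V) : Prop :=
  D.IsDitrail l ∧ l.head? = l.getLast?

/-- A digraph is supereulerian if it has a spanning closed ditrail. -/
def Supereulerian (D : Digr V) : Prop :=
  ∃ l : List V, D.IsClosedDitrail l ∧ ∀ v : V, v ∈ l

/-- Strong connectivity. -/
def Strong (D : Digr V) : Prop :=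
  ∀ u v : V, Relation.ReflTransGen D.Adj u v

noncomputable def outDeg (D : Digr V) (v : V) : ℕ := {w | D.Adj v w}.ncard
noncomputable def inDeg (D : Digr V) (v : V) : ℕ := {w | D.Adj w v}.ncard
noncomputable def deg (D : Digr V) (v : V) : ℕ := D.inDeg v + D.outDeg v

noncomputable def outDegOn (D : Digr V) (S : Set V) (v : V) : ℕ := {w ∈ S | D.Adj v w}.ncard
noncomputable def inDegOn (D : Digr V) (S : Set V) (v : V) : ℕ := {w ∈ S | D.Adj w v}.ncard
noncomputable def degOn (D : Digr V) (S : Set V) (v : V) : ℕ := D.inDegOn S v + D.outDegOn S v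

def Nonadjacent (D : Digr V) (u v : V) : Prop := ¬ D.Adj u v ∧ ¬ D.Adj v u
def Dominated (D : Digr V) (u v : V) : Prop := ∃ w, D.Adj w u ∧ D.Adj w v
def Dominating (D : Digr V) (u v : V) : Prop := ∃ w, D.Adj u w ∧ D.Adj v w

/-- A semicomplete multipartite digraph: a biorientation of a complete
multipartite graph, i.e. two vertices are joined by an arc (in some direction)
iff they lie in different parts of some partition. -/
def IsSemicompleteMultipartite (D : Digr V) : Prop :=
  ∃ (ι : Type) (part : V → ι), ∀ u v : V, (D.Adj u v ∨ D.Adj v u) ↔ part u ≠ part v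

end Digr


section Aux

variable {V : Type}

def myAdj (n : ℕ) (x y : Fin n) : Prop :=
  (3 ≤ x.val ∧ 3 ≤ y.val ∧ x.val ≠ y.val) ∨ (x.val = 2 ∧ y.val ≠ 2) ∨
  (x.val = 3 ∧ y.val = 2) ∨ (x.val ≤ 1 ∧ 3 ≤ y.val)

lemma arcs_cons_cons (a b : V) (t : List V) :
    Digr.arcs (a :: b :: t) = (a, b) :: Digr.arcs (b :: t) := rfl

lemma adj_of_mem_arcs {R : V → V → Prop} :
    ∀ {l : List V}, l.Chain' R → ∀ p ∈ Digr.arcs l, R p.1 p.2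
  | [], _, p, hp => by simp [Digr.arcs] at hp
  | [a], _, p, hp => by simp [Digr.arcs] at hp
  | a :: b :: t, hc, p, hp => by
    rw [arcs_cons_cons, List.mem_cons] at hp
    replace hc := List.isChain_cons_cons.1 hc
    rcases hp with rfl | hp
    · exact hc.1
    · exact adj_of_mem_arcs hc.2 p hp

lemma map_fst_arcs : ∀ (l : List V), (Digr.arcs l).map Prod.fst = l.dropLast
  | [] => rfl
  | [a] => rfl
  | a :: b :: t => by
    rw [arcs_cons_cons, List.map_cons, map_fst_arcs (b :: t)]
    rfl

lemma map_snd_arcs (l : List V) : (Digr.arcs l).map Prod.snd = l.tail :=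
  List.map_snd_zip (by cases l <;> simp)

lemma count_dl_tail [DecidableEq V] {l : List V} (hne : l ≠ [])
    (hc : l.head? = l.getLast?) (w : V) : l.dropLast.count w = l.tail.count w := by
  have h1 : l.dropLast ++ [l.getLast hne] = l := List.dropLast_append_getLast hne
  obtain ⟨h, t, rfl⟩ := List.exists_cons_of_ne_nil hne
  have hh : (h :: t).getLast hne = h := by
    have h2 := List.getLast?_eq_getLast hne
    rw [← hc] at h2
    simpa using h2.symm
  have h3 := congrArg (List.count w) h1
  rw [List.count_append] at h3
  rw [hh] at h3
  simp only [List.count_cons, List.count_nil, List.tail_cons] at h3 ⊢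
  omega

lemma two_le_length {α : Type*} {l : List α} {a b : α} (hab : a ≠ b)
    (ha : a ∈ l) (hb : b ∈ l) : 2 ≤ l.length := by
  match l with
  | [] => simp at ha
  | [x] =>
    simp at ha hb
    exact absurd (ha.trans hb.symm) hab
  | x :: y :: t => rw [List.length_cons, List.length_cons]; omega

lemma length_le_one_of_all_eq {α : Type*} {l : List α} {c : α} (hnd : l.Nodup)
    (h : ∀ x ∈ l, x = c) : l.length ≤ 1 := by
  match l with
  | [] => simp
  | [x] => simp
  | x :: y :: t =>
    have hx : x = c := h x (by simp)
    have hy : y = c := h y (by simp)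
    rw [hx, hy] at hnd
    simp at hnd

lemma mem_tail_of_closed {l : List V} (hne : l ≠ []) (hc : l.head? = l.getLast?)
    {a b : V} (hab : a ≠ b) (ha : a ∈ l) (hb : b ∈ l) : a ∈ l.tail := by
  obtain ⟨h, t, rfl⟩ := List.exists_cons_of_ne_nil hne
  rcases List.mem_cons.1 ha with rfl | h'
  · have ht : t ≠ [] := by
      rintro rfl
      simp at hb
      exact hab hb.symm
    have hh : (a :: t).getLast (by simp) = a := by
      have h2 := List.getLast?_eq_getLast (l := a :: t) (by simp)
      rw [← hc] at h2
      simpa using h2.symm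
    rw [List.getLast_cons ht] at hh
    rw [← hh]
    simpa using List.getLast_mem ht
  · simpa using h'

lemma count_filter_arcs [DecidableEq V] {l : List V} (hne : l ≠ [])
    (hc : l.head? = l.getLast?) (w : V) :
    ((Digr.arcs l).filter (fun p => p.1 == w)).length
      = ((Digr.arcs l).filter (fun p => p.2 == w)).length := by
  rw [← List.countP_eq_length_filter, ← List.countP_eq_length_filter]
  have h1 : List.countP (fun p => p.1 == w) (Digr.arcs l)
      = List.count w (l.dropLast) := by
    rw [← map_fst_arcs l, List.count, List.countP_map]
    rfl
  have h2 : List.countP (fun p => p.2 == w) (Digr.arcs l)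
      = List.count w (l.tail) := by
    rw [← map_snd_arcs l, List.count, List.countP_map]
    rfl
  rw [h1, h2, count_dl_tail hne hc]

end Aux

theorem stmt9 (n : ℕ) (hn : 4 ≤ n) :
    ∃ (V : Type) (_ : Fintype V) (D : Digr V),
      Fintype.card V = n ∧ D.Strong ∧ ¬ D.Supereulerian ∧
      ∃ u v : V, u ≠ v ∧ D.Nonadjacent u v ∧ D.Dominated u v ∧
        D.deg u + D.deg v = 2 * n - 4 ∧
        D.inDeg u + D.outDeg v = n - 2 ∧
        D.outDeg u + D.inDeg v = n - 2 ∧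
        (∀ u' v' : V, u' ≠ v' → D.Nonadjacent u' v' → D.Dominated u' v' →
          ({u', v'} : Set V) = {u, v}) := by
  have h0 : 0 < n := by omega
  have h1 : 1 < n := by omega
  have h2 : 2 < n := by omega
  have h3 : 3 < n := by omega
  set u0 : Fin n := ⟨0, h0⟩ with hu0
  set v1 : Fin n := ⟨1, h1⟩ with hv1
  set w2 : Fin n := ⟨2, h2⟩ with hw2
  set w3 : Fin n := ⟨3, h3⟩ with hw3
  have e0 : u0.val = 0 := rfl
  have e1 : v1.val = 1 := rfl
  have e2 : w2.val = 2 := rfl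
  have e3 : w3.val = 3 := rfl
  have huv : u0 ≠ v1 := by
    intro hEq; have := congrArg Fin.val hEq; omega
  -- degree set computations
  have hIci : ({y : Fin n | 3 ≤ y.val}).ncard = n - 3 := by
    have hset : {y : Fin n | 3 ≤ y.val} = Set.Ici w3 := by
      ext y
      simp only [Set.mem_setOf_eq, Set.mem_Ici, Fin.le_def, e3]
    rw [hset, Set.ncard_eq_toFinset_card', Set.toFinset_Ici, Fin.card_Ici, e3]
  have hsing : ∀ c : Fin n, c.val ≤ 1 → ({x : Fin n | myAdj n x c}).ncard = 1 := by
    intro c hc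
    have hset : {x : Fin n | myAdj n x c} = {w2} := by
      ext x
      simp only [Set.mem_setOf_eq, Set.mem_singleton_iff, Fin.ext_iff]
      unfold myAdj
      omega
    rw [hset, Set.ncard_singleton]
  have hout : ∀ c : Fin n, c.val ≤ 1 → ({y : Fin n | myAdj n c y}).ncard = n - 3 := by
    intro c hc
    have hset : {y : Fin n | myAdj n c y} = {y : Fin n | 3 ≤ y.val} := by
      ext y
      simp only [Set.mem_setOf_eq]
      unfold myAdj
      omega
    rw [hset, hIci]
  refine ⟨Fin n, inferInstance, ⟨myAdj n, by intro v; unfold myAdj; omega⟩,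
    Fintype.card_fin n, ?_, ?_, u0, v1, huv, ?_, ?_, ?_, ?_, ?_, ?_⟩
  · -- Strong
    intro a b
    have step1 : Relation.ReflTransGen (myAdj n) a w3 := by
      by_cases h : a = w3
      · rw [h]
      · refine Relation.ReflTransGen.single ?_
        have hv : a.val ≠ 3 := fun hv => h (Fin.ext (hv.trans e3.symm))
        have := a.isLt
        unfold myAdj; omega
    by_cases hb3 : b = w3
    · rw [hb3]; exact step1
    have h32 : myAdj n w3 w2 := by unfold myAdj; omega
    by_cases hb2 : b = w2
    · rw [hb2]; exact step1.tail h32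
    · refine (step1.tail h32).tail ?_
      have hv : b.val ≠ 2 := fun hv => hb2 (Fin.ext (hv.trans e2.symm))
      unfold myAdj; omega
  · -- not supereulerian
    rintro ⟨l, ⟨⟨hne, hchain, hnd⟩, hcl⟩, hsp⟩
    have key : ∀ c : Fin n, c.val = 0 ∨ c.val = 1 → (w2, c) ∈ Digr.arcs l := by
      intro c hcv
      have hcw : c ≠ w2 := by
        intro hEq; have := congrArg Fin.val hEq; omega
      have hmem : c ∈ l.tail :=
        mem_tail_of_closed hne hcl hcw (hsp c) (hsp w2)
      rw [← map_snd_arcs l] at hmem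
      obtain ⟨p, hp, hp2⟩ := List.mem_map.1 hmem
      have hadj := adj_of_mem_arcs hchain p hp
      rw [hp2] at hadj
      unfold myAdj at hadj
      have h21 : p.1 = w2 := Fin.ext (by omega)
      have hpe : p = (w2, c) := by rw [Prod.ext_iff]; exact ⟨h21, hp2⟩
      rwa [hpe] at hp
    have hu := key u0 (Or.inl e0)
    have hv := key v1 (Or.inr e1)
    have hG : 2 ≤ ((Digr.arcs l).filter (fun p => p.1 == w2)).length := by
      refine two_le_length (a := (w2, u0)) (b := (w2, v1)) (by simp [huv]) ?_ ?_ <;>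
        simp [List.mem_filter, hu, hv]
    have hF : ((Digr.arcs l).filter (fun p => p.2 == w2)).length ≤ 1 := by
      refine length_le_one_of_all_eq (c := (w3, w2)) (hnd.filter _) ?_
      intro p hp
      rw [List.mem_filter] at hp
      have hp2 : p.2 = w2 := by simpa using hp.2
      have hadj := adj_of_mem_arcs hchain p hp.1
      rw [hp2] at hadj
      unfold myAdj at hadj
      have hp1 : p.1 = w3 := Fin.ext (by omega)
      rw [Prod.ext_iff]; exact ⟨hp1, hp2⟩
    have := count_filter_arcs hne hcl w2
    omega
  · -- nonadjacent
    constructor <;> (show ¬ myAdj n _ _; unfold myAdj; omega)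
  · -- dominated
    refine ⟨w2, ?_, ?_⟩ <;> (show myAdj n _ _; unfold myAdj; omega)
  · -- deg
    show ({x : Fin n | myAdj n x u0}.ncard + {y : Fin n | myAdj n u0 y}.ncard)
        + ({x : Fin n | myAdj n x v1}.ncard + {y : Fin n | myAdj n v1 y}.ncard) = 2 * n - 4
    rw [hsing u0 (by omega), hsing v1 (by omega), hout u0 (by omega), hout v1 (by omega)]
    omega
  · show {x : Fin n | myAdj n x u0}.ncard + {y : Fin n | myAdj n v1 y}.ncard = n - 2
    rw [hsing u0 (by omega), hout v1 (by omega)]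
    omega
  · show {y : Fin n | myAdj n u0 y}.ncard + {x : Fin n | myAdj n x v1}.ncard = n - 2
    rw [hout u0 (by omega), hsing v1 (by omega)]
    omega
  · -- uniqueness
    intro u' v' hne' hnadj _
    obtain ⟨hn1, hn2⟩ := hnadj
    unfold myAdj at hn1 hn2
    have hval : u'.val ≠ v'.val := fun h => hne' (Fin.ext h)
    have hu' := u'.isLt
    have hv' := v'.isLt
    have hcase : (u'.val = 0 ∧ v'.val = 1) ∨ (u'.val = 1 ∧ v'.val = 0) := by omega
    rcases hcase with ⟨ha, hb⟩ | ⟨ha, hb⟩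
    · have hA : u' = u0 := Fin.ext (ha.trans e0.symm)
      have hB : v' = v1 := Fin.ext (hb.trans e1.symm)
      rw [hA, hB]
    · have hA : u' = v1 := Fin.ext (ha.trans e1.symm)
      have hB : v' = u0 := Fin.ext (hb.trans e0.symm)
      rw [hA, hB, Set.pair_comm]
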